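/- arXiv:1612.07475 — 2 statements merged into one kernel-verified Lean document; each statement's English description precedes it below -/
import Mathlib

section
/- Let A, B, C, D be strings of length n, $ a fresh character, Z = $^{2n+1}, X = reverse(A) ++ Z ++ B, Y = reverse(C) ++ Z ++ D. Then the maximum length of a common palindromic subsequence of X and Y equals 2n + 1 + 2·L, where L is the maximum length of a common subsequence of A, B, C, and D. -/
private lemma uniqA {α : Type*} {d : α} :
    ∀ (u u' t t' : List α), d ∉ u → d ∉ u' → u ++ d :: t = u' ++ d :: t' →
      u = u' ∧ t = t' := by
  intro u
  induction u with
  | nil =>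
    intro u' t t' _ hu' h
    cases u' with
    | nil => simpa using h
    | cons a u' =>
      simp at h
      exact absurd (h.1 ▸ List.mem_cons_self (a := a) (l := u')) hu'
  | cons a u ih =>
    intro u' t t' hu hu' h
    cases u' with
    | nil =>
      simp at h
      exact absurd (h.1 ▸ List.mem_cons_self (a := a) (l := u)) hu
    | cons b u' =>
      simp only [List.cons_append, List.cons.injEq] at h
      obtain ⟨rfl, h⟩ := h
      have := ih u' t t' (fun hm => hu (List.mem_cons_of_mem _ hm))
        (fun hm => hu' (List.mem_cons_of_mem _ hm)) h
      exact ⟨by rw [this.1], this.2⟩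

private lemma uniqB {α : Type*} {d : α} :
    ∀ (j j' : ℕ) (w w' : List α), d ∉ w → d ∉ w' →
      List.replicate j d ++ w = List.replicate j' d ++ w' → j = j' ∧ w = w' := by
  intro j
  induction j with
  | zero =>
    intro j' w w' hw hw' h
    cases j' with
    | zero => simpa using h
    | succ j' =>
      simp only [List.replicate_zero, List.nil_append, List.replicate_succ,
        List.cons_append] at h
      exact absurd (h ▸ List.mem_cons_self (a := d)) hw
  | succ j ih =>
    intro j' w w' hw hw' h
    cases j' with
    | zero =>
      simp only [List.replicate_zero, List.nil_append, List.replicate_succ,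
        List.cons_append] at h
      exact absurd (h ▸ List.mem_cons_self (a := d)) hw'
    | succ j' =>
      simp only [List.replicate_succ, List.cons_append, List.cons.injEq] at h
      have := ih j' w w' hw hw' h.2
      exact ⟨by rw [this.1], this.2⟩

private lemma sandwich_uniq {α : Type*} {d : α} {u u' w w' : List α} {k k' : ℕ}
    (hu : d ∉ u) (hu' : d ∉ u') (hw : d ∉ w) (hw' : d ∉ w')
    (hk : 1 ≤ k) (hk' : 1 ≤ k')
    (h : u ++ List.replicate k d ++ w = u' ++ List.replicate k' d ++ w') :
    u = u' ∧ k = k' ∧ w = w' := by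
  obtain ⟨k, rfl⟩ := Nat.exists_eq_add_of_le hk
  obtain ⟨k', rfl⟩ := Nat.exists_eq_add_of_le hk'
  simp only [List.replicate_succ', List.replicate_succ, List.cons_append,
    List.append_assoc] at h
  rw [show (1 + k) = k + 1 from Nat.add_comm 1 k,
      show (1 + k') = k' + 1 from Nat.add_comm 1 k',
      List.replicate_succ] at h
  simp only [List.cons_append, List.append_assoc, List.replicate_succ] at h
  have h1 := uniqA u u' _ _ hu hu' (by simpa using h)
  obtain ⟨rfl, h2⟩ := h1
  have h3 := uniqB k k' w w' hw hw' h2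
  exact ⟨rfl, by omega, h3.2⟩

theorem stmt_5 {α : Type*} (n : ℕ) (A B C D : List α) (d : α)
    (hA : A.length = n) (hB : B.length = n) (hC : C.length = n) (hD : D.length = n)
    (hdA : d ∉ A) (hdB : d ∉ B) (hdC : d ∉ C) (hdD : d ∉ D)
    (Z X Y : List α)
    (hZ : Z = List.replicate (2 * n + 1) d)
    (hX : X = A.reverse ++ Z ++ B) (hY : Y = C.reverse ++ Z ++ D)
    (L : ℕ)
    (hL : IsGreatest {l : ℕ | ∃ T : List α,
      T.Sublist A ∧ T.Sublist B ∧ T.Sublist C ∧ T.Sublist D ∧ T.length = l} L) :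
    IsGreatest {l : ℕ | ∃ P : List α,
      P.reverse = P ∧ P.Sublist X ∧ P.Sublist Y ∧ P.length = l}
      (2 * n + 1 + 2 * L) := by
  obtain ⟨⟨T, hTA, hTB, hTC, hTD, hTlen⟩, hub⟩ := hL
  constructor
  · -- membership
    refine ⟨T.reverse ++ Z ++ T, ?_, ?_, ?_, ?_⟩
    · simp [hZ, List.reverse_append, List.reverse_replicate, List.append_assoc]
    · rw [hX]
      exact (hTA.reverse.append (List.Sublist.refl Z)).append hTB
    · rw [hY]
      exact (hTC.reverse.append (List.Sublist.refl Z)).append hTD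
    · simp [hZ, hTlen]; ring
  · -- upper bound
    rintro l ⟨P, hpal, hPX, hPY, rfl⟩
    rw [hX] at hPX
    rw [hY] at hPY
    obtain ⟨uv, w, rfl, huv, hwB⟩ := List.sublist_append_iff.mp hPX
    obtain ⟨u, v, rfl, huA, hvZ⟩ := List.sublist_append_iff.mp huv
    obtain ⟨u'v', w', hP', hu'v', hw'D⟩ := List.sublist_append_iff.mp hPY
    obtain ⟨u', v', rfl, hu'C, hv'Z⟩ := List.sublist_append_iff.mp hu'v'
    rw [hZ] at hvZ hv'Z
    obtain ⟨k, hk, rfl⟩ := List.sublist_replicate_iff.mp hvZ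
    obtain ⟨k', hk', rfl⟩ := List.sublist_replicate_iff.mp hv'Z
    have hdu : d ∉ u := fun h => hdA (List.mem_reverse.mp (huA.subset h))
    have hdw : d ∉ w := fun h => hdB (hwB.subset h)
    have hdu' : d ∉ u' := fun h => hdC (List.mem_reverse.mp (hu'C.subset h))
    have hdw' : d ∉ w' := fun h => hdD (hw'D.subset h)
    rcases Nat.eq_zero_or_pos k with rfl | hkpos
    · -- no d in P; but then k' = 0 too, bound by 2n
      have hlu : u.length ≤ n := by
        have := huA.length_le; simpa [hA] using this
      have hlw : w.length ≤ n := by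
        have := hwB.length_le; simpa [hB] using this
      simp only [List.replicate_zero, List.append_nil, List.length_append]
      omega
    · rcases Nat.eq_zero_or_pos k' with rfl | hk'pos
      · -- k' = 0 but k ≥ 1 : then d ∈ P from left decomposition but not right
        exfalso
        have hdP : d ∈ u ++ List.replicate k d ++ w := by
          simp [List.mem_replicate]
          omega
        rw [hP'] at hdP
        simp only [List.replicate_zero, List.append_nil, List.mem_append] at hdP
        rcases hdP with h | h
        · exact hdu' h
        · exact hdw' h
      · -- both ≥ 1
        have heq : u ++ List.replicate k d ++ w = u' ++ List.replicate k' d ++ w' := hP'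
        obtain ⟨rfl, rfl, rfl⟩ := sandwich_uniq hdu hdu' hdw hdw' hkpos hk'pos heq
        -- palindrome condition
        have hrev : w.reverse ++ List.replicate k d ++ u.reverse
            = u ++ List.replicate k d ++ w := by
          have := hpal
          simpa [List.reverse_append, List.reverse_replicate, List.append_assoc,
            ← List.append_assoc] using this
        have hdwr : d ∉ w.reverse := fun h => hdw (List.mem_reverse.mp h)
        have hdur : d ∉ u.reverse := fun h => hdu (List.mem_reverse.mp h)
        obtain ⟨hwu, -, hur⟩ := sandwich_uniq hdwr hdu hdur hdw hkpos hkpos hrev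
        -- w.reverse = u, u.reverse = w
        have hwA : w.Sublist A := by
          have := huA.reverse
          rwa [← hwu, List.reverse_reverse, List.reverse_reverse] at this
        have hwC : w.Sublist C := by
          have := hu'C.reverse
          rwa [← hwu, List.reverse_reverse, List.reverse_reverse] at this
        have hwL : w.length ≤ L := hub ⟨w, hwA, hwB, hwC, hw'D, rfl⟩
        have hul : u.length = w.length := by
          rw [← hwu]; simp
        simp only [List.length_append, List.length_replicate]
        omega
end

section
/- Given a palindrome P of even length 2r that is a common subsequence of A and B, there exists a chain of r nested rectangles of matching position pairs: sequences i₁ < ... < i_r < j_r < ... < j₁ in positions of A and k₁ < ... < k_r < ℓ_r < ... < ℓ₁ in positions of B, such that A_{i_t} = A_{j_t} = B_{k_t} = B_{ℓ_t} = P_t = P_{2r+1-t} for all 1 ≤ t ≤ r. -/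
theorem stmt_13 {α : Type*} (A B P : List α) (r : ℕ)
    (hpal : P.reverse = P) (hlen : P.length = 2 * r)
    (hA : P.Sublist A) (hB : P.Sublist B) :
    ∃ (i j : Fin r → Fin A.length) (k l : Fin r → Fin B.length),
      StrictMono i ∧ StrictAnti j ∧ StrictMono k ∧ StrictAnti l ∧
      (∀ t : Fin r, (i t : ℕ) < j t) ∧ (∀ t : Fin r, (k t : ℕ) < l t) ∧
      ∀ t : Fin r,
        A.get (i t) = A.get (j t) ∧
        A.get (i t) = B.get (k t) ∧
        A.get (i t) = B.get (l t) ∧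
        A.get (i t) = P.get ⟨t, by omega⟩ ∧
        A.get (i t) = P.get ⟨2 * r - 1 - t, by omega⟩ := by
  obtain ⟨f, hf⟩ := List.sublist_iff_exists_fin_orderEmbedding_get_eq.mp hA
  obtain ⟨g, hg⟩ := List.sublist_iff_exists_fin_orderEmbedding_get_eq.mp hB
  have hlo : ∀ t : Fin r, (t : ℕ) < P.length := fun t => by omega
  have hhi : ∀ t : Fin r, 2 * r - 1 - (t : ℕ) < P.length := fun t => by omega
  -- palindrome symmetry
  have hsym : ∀ t : Fin r, P.get ⟨t, hlo t⟩ = P.get ⟨2 * r - 1 - t, hhi t⟩ := by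
    intro t
    have h := congrArg (fun L => L[2 * r - 1 - (t : ℕ)]?) hpal
    rw [List.getElem?_reverse (by omega)] at h
    have hidx : P.length - 1 - (2 * r - 1 - (t : ℕ)) = (t : ℕ) := by omega
    rw [hidx, List.getElem?_eq_getElem (hlo t), List.getElem?_eq_getElem (hhi t)] at h
    exact Option.some_injective _ h
  refine ⟨fun t => f ⟨t, hlo t⟩, fun t => f ⟨2 * r - 1 - t, hhi t⟩,
    fun t => g ⟨t, hlo t⟩, fun t => g ⟨2 * r - 1 - t, hhi t⟩, ?_, ?_, ?_, ?_, ?_, ?_, ?_⟩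
  · intro a b hab; exact f.strictMono (by simpa using hab)
  · intro a b hab
    exact f.strictMono (show (⟨2 * r - 1 - b, hhi b⟩ : Fin P.length) < ⟨2 * r - 1 - a, hhi a⟩
      from by simp only [Fin.mk_lt_mk]; omega)
  · intro a b hab; exact g.strictMono (by simpa using hab)
  · intro a b hab
    exact g.strictMono (show (⟨2 * r - 1 - b, hhi b⟩ : Fin P.length) < ⟨2 * r - 1 - a, hhi a⟩
      from by simp only [Fin.mk_lt_mk]; omega)
  · intro t
    exact f.strictMono (show (⟨t, hlo t⟩ : Fin P.length) < ⟨2 * r - 1 - t, hhi t⟩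
      from by simp only [Fin.mk_lt_mk]; omega)
  · intro t
    exact g.strictMono (show (⟨t, hlo t⟩ : Fin P.length) < ⟨2 * r - 1 - t, hhi t⟩
      from by simp only [Fin.mk_lt_mk]; omega)
  · intro t
    have e1 : A.get (f ⟨t, hlo t⟩) = P.get ⟨t, hlo t⟩ := (hf _).symm
    have e2 : A.get (f ⟨2 * r - 1 - t, hhi t⟩) = P.get ⟨2 * r - 1 - t, hhi t⟩ := (hf _).symm
    have e3 : B.get (g ⟨t, hlo t⟩) = P.get ⟨t, hlo t⟩ := (hg _).symm
    have e4 : B.get (g ⟨2 * r - 1 - t, hhi t⟩) = P.get ⟨2 * r - 1 - t, hhi t⟩ := (hg _).symm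
    refine ⟨?_, ?_, ?_, ?_, ?_⟩ <;> rw [e1] <;>
      first
        | (rw [e2, hsym])
        | (rw [e3])
        | (rw [e4, hsym])
        | rfl
        | exact hsym t
end
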